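/- Let m, n be positive integers. If A ∈ M_{m,n}(ℝ) is non-singular, then for any δ > 0 the set Bad_A(δ) has Lebesgue measure zero; consequently Bad_A = ⋃_{δ>0} Bad_A(δ) has Lebesgue measure zero. -/

import Mathlib

open MeasureTheory Filter Topology Metric
open scoped ENNReal

/-- Distance from `x ∈ ℝ^k` to the nearest integer vector, in the sup norm. -/
noncomputable def intDist {k : ℕ} (x : Fin k → ℝ) : ℝ :=
  ⨅ p : Fin k → ℤ, ‖x - (fun i => (p i : ℝ))‖

/-- The set `W_A(ψ)` of `ψ`-approximable targets `b ∈ [0,1]^m` for `A`. -/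
noncomputable def WA (m n : ℕ) (A : Matrix (Fin m) (Fin n) ℝ) (ψ : ℝ → ℝ) :
    Set (Fin m → ℝ) :=
  {b | b ∈ Set.Icc (0 : Fin m → ℝ) 1 ∧
    {q : Fin n → ℤ |
      intDist (A.mulVec (fun j => (q j : ℝ)) - b) < ψ ‖(fun j => (q j : ℝ))‖}.Infinite}

/-- `A` is singular: for every `ε > 0` and all sufficiently large `X ≥ 1` there is
`q ∈ ℤ^n` with `‖Aq‖_ℤ < ε X^{-n/m}` and `0 < ‖q‖ < X`. -/
def Singular (m n : ℕ) (A : Matrix (Fin m) (Fin n) ℝ) : Prop :=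
  ∀ ε : ℝ, 0 < ε → ∃ X₀ : ℝ, 1 ≤ X₀ ∧ ∀ X : ℝ, X₀ ≤ X →
    ∃ q : Fin n → ℤ,
      intDist (A.mulVec (fun j => (q j : ℝ))) < ε * X ^ (-(n : ℝ) / m) ∧
      0 < ‖(fun j => (q j : ℝ))‖ ∧ ‖(fun j => (q j : ℝ))‖ < X

/-- `Bad_A(δ) = [0,1]^m ∖ W_A(ψ_δ)` where `ψ_δ(q) = δ q^{-n/m}`. -/
noncomputable def BadA (m n : ℕ) (A : Matrix (Fin m) (Fin n) ℝ) (δ : ℝ) :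
    Set (Fin m → ℝ) :=
  Set.Icc (0 : Fin m → ℝ) 1 \ WA m n A (fun r => δ * r ^ (-(n : ℝ) / m))

namespace Aux


/-- cast of integer vector -/
def iv {k : ℕ} (q : Fin k → ℤ) : Fin k → ℝ := fun i => (q i : ℝ)

lemma iv_sub {k : ℕ} (q q' : Fin k → ℤ) : iv (q - q') = iv q - iv q' := by
  funext i; simp [iv]

lemma iv_add {k : ℕ} (q q' : Fin k → ℤ) : iv (q + q') = iv q + iv q' := by
  funext i; simp [iv]

lemma iv_zero {k : ℕ} : iv (0 : Fin k → ℤ) = 0 := by funext i; simp [iv]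

lemma iv_inj {k : ℕ} {q q' : Fin k → ℤ} (h : iv q = iv q') : q = q' := by
  funext i
  have := congrFun h i
  simp only [iv] at this
  exact_mod_cast this

lemma intDist_eq {k : ℕ} (x : Fin k → ℝ) : intDist x = ⨅ p : Fin k → ℤ, ‖x - iv p‖ := rfl

lemma intDist_nonneg {k : ℕ} (x : Fin k → ℝ) : 0 ≤ intDist x :=
  Real.iInf_nonneg (fun p => norm_nonneg _)

lemma bdd {k : ℕ} (x : Fin k → ℝ) :
    BddBelow (Set.range fun p : Fin k → ℤ => ‖x - iv p‖) :=
  ⟨0, by rintro y ⟨p, rfl⟩; exact norm_nonneg _⟩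

lemma intDist_le {k : ℕ} (x : Fin k → ℝ) (p : Fin k → ℤ) : intDist x ≤ ‖x - iv p‖ :=
  ciInf_le (bdd x) p

lemma intDist_lt_iff {k : ℕ} {x : Fin k → ℝ} {c : ℝ} :
    intDist x < c ↔ ∃ p : Fin k → ℤ, ‖x - iv p‖ < c :=
  ciInf_lt_iff (bdd x)

/-- `intDist` is invariant under adding integer vectors. -/
lemma intDist_add_iv {k : ℕ} (x : Fin k → ℝ) (p₀ : Fin k → ℤ) :
    intDist (x + iv p₀) = intDist x := by
  have key : ∀ (y : Fin k → ℝ) (r : Fin k → ℤ), intDist (y + iv r) ≤ intDist y := by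
    intro y r
    rw [intDist_eq y]
    apply le_ciInf
    intro p
    have h : intDist (y + iv r) ≤ ‖(y + iv r) - iv (p + r)‖ := intDist_le _ _
    have h2 : (y + iv r) - iv (p + r) = y - iv p := by rw [iv_add]; abel
    rwa [h2] at h
  refine le_antisymm (key x p₀) ?_
  have := key (x + iv p₀) (-p₀)
  have h2 : x + iv p₀ + iv (-p₀) = x := by
    funext i; simp [iv]
  rwa [h2] at this

lemma intDist_le_add_norm {k : ℕ} (x y : Fin k → ℝ) :
    intDist x ≤ intDist y + ‖x - y‖ := by
  have : ∀ p : Fin k → ℤ, intDist x - ‖x - y‖ ≤ ‖y - iv p‖ := by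
    intro p
    have h1 : intDist x ≤ ‖x - iv p‖ := intDist_le x p
    have h2 : ‖x - iv p‖ ≤ ‖y - iv p‖ + ‖x - y‖ := by
      have := norm_sub_le_norm_sub_add_norm_sub x y (iv p)
      linarith [norm_sub_le (x - y) (y - iv p)]
    linarith
  have h := le_ciInf this
  rw [← intDist_eq] at h
  linarith

lemma eq_iv_of_intDist_eq_zero {k : ℕ} {x : Fin k → ℝ} (h : intDist x = 0) :
    ∃ p : Fin k → ℤ, x = iv p := by
  have h2 : intDist x < 1/2 := by rw [h]; norm_num
  obtain ⟨p, hp⟩ := intDist_lt_iff.1 h2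
  refine ⟨p, ?_⟩
  by_contra hne
  have hpos : 0 < ‖x - iv p‖ := by
    rw [norm_pos_iff]
    intro h0
    exact hne (by rwa [sub_eq_zero] at h0)
  have h3 : intDist x < ‖x - iv p‖ := by rw [h]; exact hpos
  obtain ⟨p', hp'⟩ := intDist_lt_iff.1 (by rw [h]; exact hpos)
  by_cases hpp : p' = p
  · rw [hpp] at hp'; exact absurd hp' (lt_irrefl _)
  · -- ‖iv p - iv p'‖ ≥ 1 but ≤ ‖x - iv p‖ + ‖x - iv p'‖ < 1
    have hne2 : p - p' ≠ 0 := sub_ne_zero.2 (Ne.symm hpp)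
    obtain ⟨i, hi⟩ := Function.ne_iff.1 hne2
    have hi1 : (1 : ℝ) ≤ |(p i : ℝ) - (p' i : ℝ)| := by
      have : p i - p' i ≠ 0 := by
        intro hc; apply hi; simp [hc]
      have : 1 ≤ |p i - p' i| := Int.one_le_abs this
      calc (1:ℝ) ≤ |(p i - p' i : ℤ)| := by exact_mod_cast this
        _ = |(p i : ℝ) - (p' i : ℝ)| := by push_cast; ring_nf
    have hb : |(p i : ℝ) - (p' i : ℝ)| ≤ ‖iv p - iv p'‖ := by
      have := norm_le_pi_norm (iv p - iv p') i
      simpa [iv, Real.norm_eq_abs] using this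
    have htri : ‖iv p - iv p'‖ ≤ ‖x - iv p'‖ + ‖x - iv p‖ := by
      have heq : iv p - iv p' = (x - iv p') - (x - iv p) := by abel
      rw [heq]
      exact norm_sub_le _ _
    have hlt : ‖x - iv p'‖ < 1/2 := lt_trans hp' hp
    linarith
  
lemma norm_iv_pos {k : ℕ} {q : Fin k → ℤ} (h : q ≠ 0) : 1 ≤ ‖iv q‖ := by
  obtain ⟨i, hi⟩ := Function.ne_iff.1 h
  have h1 : (1:ℝ) ≤ |(q i : ℝ)| := by
    have : 1 ≤ |q i| := Int.one_le_abs (by simpa using hi)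
    exact_mod_cast this
  have := norm_le_pi_norm (iv q) i
  simp only [iv, Real.norm_eq_abs] at this
  linarith

lemma finite_iv_le {k : ℕ} (c : ℝ) : {q : Fin k → ℤ | ‖iv q‖ ≤ c}.Finite := by
  apply Set.Finite.subset (Set.Finite.pi (fun i : Fin k => Set.finite_Icc (⌈-c⌉) (⌊c⌋)))
  intro q hq
  simp only [Set.mem_pi, Set.mem_univ, Set.mem_Icc, forall_true_left]
  intro i
  have := norm_le_pi_norm (iv q) i
  simp only [iv, Real.norm_eq_abs] at this
  have habs : |(q i : ℝ)| ≤ c := le_trans this hq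
  rw [abs_le] at habs
  constructor
  · exact Int.ceil_le.2 (by exact_mod_cast habs.1)
  · exact Int.le_floor.2 (by exact_mod_cast habs.2)


section Main
variable {m n : ℕ} (A : Matrix (Fin m) (Fin n) ℝ)

/-- The approximable set, without the `Icc` restriction. -/
def Wfull (δ : ℝ) : Set (Fin m → ℝ) :=
  {b | {q : Fin n → ℤ |
    intDist (A.mulVec (iv q) - b) < δ * ‖iv q‖ ^ (-(n : ℝ) / m)}.Infinite}

/-- exponent is negative -/
lemma expo_neg (hm : 0 < m) (hn : 0 < n) : -(n : ℝ) / m < 0 := by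
  apply div_neg_of_neg_of_pos
  · simpa using (Nat.cast_pos (α := ℝ)).2 hn
  · exact_mod_cast hm

lemma rpow_le_one' {X : ℝ} (hX : 1 ≤ X) (e : ℝ) (he : e ≤ 0) : X ^ e ≤ 1 :=
  Real.rpow_le_one_of_one_le_of_nonpos hX he

lemma rpow_expo_pos {X : ℝ} (hX : 0 < X) (e : ℝ) : 0 < X ^ e := Real.rpow_pos_of_pos hX e

/-- `(X ^ (-(n/m))) ^ m = (X ^ n)⁻¹` -/
lemma rpow_pow (hm : 0 < m) {X : ℝ} (hX : 0 < X) :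
    (X ^ (-(n : ℝ) / m)) ^ m = (X ^ n)⁻¹ := by
  have h1 : ((X ^ (-(n : ℝ) / m)) ^ m : ℝ) = X ^ ((-(n : ℝ) / m) * m) := by
    rw [← Real.rpow_natCast (X ^ (-(n : ℝ) / m)) m, ← Real.rpow_mul hX.le]
  rw [h1]
  have hm' : (m : ℝ) ≠ 0 := by exact_mod_cast hm.ne'
  have : (-(n : ℝ) / m) * m = -(n : ℝ) := by field_simp
  rw [this, Real.rpow_neg hX.le, Real.rpow_natCast]


/-- Extraction from non-singularity. -/
lemma nonsingular_spec (hA : ¬ Singular m n A) :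
    ∃ ε : ℝ, 0 < ε ∧ ε ≤ 1 ∧ ∀ X₀ : ℝ, ∃ X, X₀ ≤ X ∧ 8 ≤ X ∧
      ∀ q : Fin n → ℤ, q ≠ 0 → ‖iv q‖ < X →
        ε * X ^ (-(n : ℝ) / m) ≤ intDist (A.mulVec (iv q)) := by
  rw [Singular] at hA
  push_neg at hA
  obtain ⟨ε₀, hε₀, hspec⟩ := hA
  refine ⟨min ε₀ 1, lt_min hε₀ one_pos, min_le_right _ _, ?_⟩
  intro X₀
  obtain ⟨X, hXge, hX⟩ := hspec (max 8 (max X₀ 1)) (le_max_of_le_right (le_max_right _ _))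
  refine ⟨X, le_trans (le_max_of_le_right (le_max_left _ _)) hXge,
    le_trans (le_max_left _ _) hXge, ?_⟩
  intro q hq hqX
  have h1 : (1 : ℝ) ≤ ‖iv q‖ := norm_iv_pos hq
  have hpos : 0 < ‖(fun j => ((q j : ℝ)))‖ := by
    have : ‖(fun j => ((q j : ℝ)))‖ = ‖iv q‖ := rfl
    rw [this]; linarith
  have := hX q
  by_contra hcon
  push_neg at hcon
  have hlt : intDist (A.mulVec (fun j => (q j : ℝ))) < ε₀ * X ^ (-(n : ℝ) / m) := by
    have he : (0:ℝ) < X ^ (-(n : ℝ) / m) := Real.rpow_pos_of_pos (by linarith [le_trans (le_max_left 8 (max X₀ 1)) hXge] : (0:ℝ) < X) _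
    have : min ε₀ 1 * X ^ (-(n : ℝ) / m) ≤ ε₀ * X ^ (-(n : ℝ) / m) := by
      apply mul_le_mul_of_nonneg_right (min_le_left _ _) he.le
    calc intDist (A.mulVec (fun j => (q j : ℝ))) = intDist (A.mulVec (iv q)) := rfl
      _ < min ε₀ 1 * X ^ (-(n : ℝ) / m) := hcon
      _ ≤ _ := this
  exact absurd hqX (not_lt.2 (this hlt hpos))

/-- the finset of integer vectors with coordinates bounded by `M` -/
noncomputable def Sbox (n M : ℕ) : Finset (Fin n → ℤ) :=
  Fintype.piFinset (fun _ : Fin n => Finset.Icc (-(M : ℤ)) M)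

lemma card_Sbox (n M : ℕ) : (Sbox n M).card = (2 * M + 1) ^ n := by
  rw [Sbox, Fintype.card_piFinset]
  simp [Int.card_Icc]
  congr 1
  omega

lemma mem_Sbox {n M : ℕ} {q : Fin n → ℤ} (h : q ∈ Sbox n M) : ‖iv q‖ ≤ (M : ℝ) := by
  rw [Sbox, Fintype.mem_piFinset] at h
  apply pi_norm_le_iff_of_nonneg (by positivity) |>.2
  intro i
  have := h i
  rw [Finset.mem_Icc] at this
  rw [iv, Real.norm_eq_abs]
  rw [abs_le]
  constructor <;> [exact_mod_cast this.1; exact_mod_cast this.2]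

lemma sub_mem_norm {n M : ℕ} {q q' : Fin n → ℤ} (h : q ∈ Sbox n M) (h' : q' ∈ Sbox n M) :
    ‖iv (q - q')‖ ≤ 2 * (M : ℝ) := by
  rw [iv_sub]
  calc ‖iv q - iv q'‖ ≤ ‖iv q‖ + ‖iv q'‖ := norm_sub_le _ _
    _ ≤ (M : ℝ) + M := add_le_add (mem_Sbox h) (mem_Sbox h')
    _ = 2 * M := by ring


/-- One-scale lemma. -/
lemma scale_lemma (hm : 0 < m) (hn : 0 < n) {ε δ X : ℝ} (hε : 0 < ε) (hε1 : ε ≤ 1)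
    (hδ : 0 < δ) (hX : 8 ≤ X)
    (hsep : ∀ q : Fin n → ℤ, q ≠ 0 → ‖iv q‖ < X →
      ε * X ^ (-(n : ℝ) / m) ≤ intDist (A.mulVec (iv q))) :
    ∃ E : Set (Fin m → ℝ), MeasurableSet E ∧ E ⊆ Set.Icc 0 1 ∧
      ENNReal.ofReal ((min δ ε / 8) ^ m * ((8:ℝ)⁻¹) ^ n) ≤ volume E ∧
      ∀ b ∈ E, ∃ q : Fin n → ℤ, q ≠ 0 ∧ 4 * ‖iv q‖ ≤ X ∧
        intDist (A.mulVec (iv q) - b) ≤ (min δ ε / 8) * X ^ (-(n : ℝ) / m) := by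
  have hX0 : (0:ℝ) < X := by linarith
  set e : ℝ := -(n : ℝ) / m with he
  have hXe : 0 < X ^ e := Real.rpow_pos_of_pos hX0 _
  have hXe1 : X ^ e ≤ 1 := Real.rpow_le_one_of_one_le_of_nonpos (by linarith) (expo_neg hm hn).le
  set ε₁ : ℝ := min δ ε / 8 with hε₁def
  have hε₁ : 0 < ε₁ := by positivity
  have hε₁ε : ε₁ ≤ ε / 8 := by
    apply div_le_div_of_nonneg_right (min_le_right _ _) (by norm_num) |>.trans_eq rfl
  have hε₁δ : ε₁ ≤ δ := le_trans (by apply div_le_div_of_nonneg_right (min_le_left _ _) (by norm_num)) (by linarith)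
  have hε₁8 : ε₁ ≤ 1/8 := by
    have : min δ ε ≤ 1 := le_trans (min_le_right _ _) hε1
    rw [hε₁def]; linarith
  set ρ : ℝ := ε₁ * X ^ e with hρdef
  have hρ : 0 < ρ := by positivity
  have hρ1 : ρ ≤ 1/8 := by
    calc ρ ≤ ε₁ * 1 := by apply mul_le_mul_of_nonneg_left hXe1 hε₁.le
      _ ≤ 1/8 := by linarith
  set M : ℕ := ⌊X/4⌋₊ with hMdef
  have hM8 : (X/8 : ℝ) ≤ M := by
    have h1 : X/4 - 1 < (M : ℝ) := Nat.sub_one_lt_floor (X/4)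
    linarith
  have hM4 : (M : ℝ) ≤ X/4 := Nat.floor_le (by linarith)
  set S' : Finset (Fin n → ℤ) := (Sbox n M).erase 0 with hS'def
  have hS'norm : ∀ q ∈ S', ‖iv q‖ ≤ X/4 := fun q hq =>
    le_trans (mem_Sbox (Finset.mem_of_mem_erase hq)) hM4
  have hS'ne : ∀ q ∈ S', q ≠ 0 := fun q hq => Finset.ne_of_mem_erase hq
  -- centers
  set pfl : (Fin n → ℤ) → (Fin m → ℤ) := fun q => fun i => ⌊A.mulVec (iv q) i⌋ with hpfl
  set c : (Fin n → ℤ) → (Fin m → ℝ) := fun q => A.mulVec (iv q) - iv (pfl q) with hcdef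
  have hc0 : ∀ q i, 0 ≤ c q i ∧ c q i < 1 := by
    intro q i
    have h1 : c q i = Int.fract (A.mulVec (iv q) i) := rfl
    rw [h1]
    exact ⟨Int.fract_nonneg _, Int.fract_lt_one _⟩
  have hcsep : ∀ q ∈ S', ∀ q' ∈ S', q ≠ q' → ε * X ^ e ≤ dist (c q) (c q') := by
    intro q hq q' hq' hne
    have hd0 : q - q' ≠ 0 := sub_ne_zero.2 hne
    have hdn : ‖iv (q - q')‖ < X := by
      rw [iv_sub]
      calc ‖iv q - iv q'‖ ≤ ‖iv q‖ + ‖iv q'‖ := norm_sub_le _ _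
        _ ≤ X/4 + X/4 := add_le_add (hS'norm q hq) (hS'norm q' hq')
        _ < X := by linarith
    have hkey := hsep (q - q') hd0 hdn
    have : intDist (A.mulVec (iv (q - q'))) ≤ dist (c q) (c q') := by
      have heq : A.mulVec (iv (q - q')) - iv (pfl q - pfl q') = c q - c q' := by
        rw [iv_sub, iv_sub, Matrix.mulVec_sub]
        simp only [hcdef]
        abel
      calc intDist (A.mulVec (iv (q - q'))) ≤ ‖A.mulVec (iv (q - q')) - iv (pfl q - pfl q')‖ :=
            intDist_le _ _
        _ = ‖c q - c q'‖ := by rw [heq]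
        _ = dist (c q) (c q') := (dist_eq_norm _ _).symm
    linarith
  set E : Set (Fin m → ℝ) := ⋃ q ∈ S', (Metric.closedBall (c q) ρ ∩ Set.Icc 0 1) with hEdef
  have hEmeas : MeasurableSet E := by
    apply Set.Finite.measurableSet_biUnion (S'.finite_toSet)
    exact fun q _ => (measurableSet_closedBall).inter measurableSet_Icc
  have hEsub : E ⊆ Set.Icc 0 1 := by
    apply Set.iUnion₂_subset
    exact fun q _ => Set.inter_subset_right
  refine ⟨E, hEmeas, hEsub, ?_, ?_⟩
  · -- measure lower bound
    have hdisj : (↑S' : Set (Fin n → ℤ)).PairwiseDisjoint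
        (fun q => Metric.closedBall (c q) ρ ∩ Set.Icc (0:Fin m → ℝ) 1) := by
      intro q hq q' hq' hne
      apply Set.disjoint_of_subset Set.inter_subset_left Set.inter_subset_left
      apply Metric.closedBall_disjoint_closedBall
      have := hcsep q hq q' hq' hne
      have h2 : ρ + ρ < ε * X ^ e := by
        have : ρ + ρ ≤ (ε/4) * X ^ e := by
          rw [hρdef]
          have : ε₁ + ε₁ ≤ ε/4 := by linarith
          nlinarith [hXe]
        nlinarith [hXe, hε]
      linarith
    have hvol := measure_biUnion_finset (μ := (volume : Measure (Fin m → ℝ))) hdisj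
      (fun q _ => (measurableSet_closedBall).inter (measurableSet_Icc (α := Fin m → ℝ)))
    rw [hEdef, hvol]
    have hball : ∀ q ∈ S', ENNReal.ofReal (ρ^m) ≤
        volume (Metric.closedBall (c q) ρ ∩ Set.Icc (0:Fin m → ℝ) 1) := by
      intro q _
      set t : Fin m → ℝ := fun i => min (c q i) (1 - ρ) with htdef
      have hbox : (Set.pi Set.univ fun i => Set.Icc (t i) (t i + ρ)) ⊆
          Metric.closedBall (c q) ρ ∩ Set.Icc (0:Fin m → ℝ) 1 := by
        intro x hx
        simp only [Set.mem_pi, Set.mem_univ, forall_true_left, Set.mem_Icc] at hx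
        constructor
        · rw [Metric.mem_closedBall]
          rw [dist_pi_le_iff hρ.le]
          intro i
          rw [Real.dist_eq, abs_le]
          have h1 := (hx i).1
          have h2 := (hx i).2
          have h3 : c q i - ρ ≤ t i := by
            apply le_min (by linarith) (by linarith [(hc0 q i).2])
          have h4 : t i ≤ c q i := min_le_left _ _
          constructor <;> linarith
        · rw [Set.mem_Icc]
          constructor <;> intro i
          · have h1 := (hx i).1
            have h3 : (0:ℝ) ≤ t i := le_min (hc0 q i).1 (by linarith)
            simpa using le_trans h3 h1
          · have h2 := (hx i).2
            have h4 : t i ≤ 1 - ρ := min_le_right _ _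
            simpa using by linarith
      calc ENNReal.ofReal (ρ^m)
          = volume (Set.pi Set.univ fun i => Set.Icc (t i) (t i + ρ)) := by
            rw [volume_pi_pi]
            simp only [Real.volume_Icc, add_sub_cancel_left]
            rw [Finset.prod_const, Finset.card_univ, Fintype.card_fin,
              ENNReal.ofReal_pow hρ.le]
        _ ≤ _ := measure_mono hbox
    calc ENNReal.ofReal (ε₁ ^ m * ((8:ℝ)⁻¹) ^ n)
        = ENNReal.ofReal ((X/8)^n * ρ^m) := by
          congr 1
          have hXn : (X:ℝ)^n ≠ 0 := by positivity
          have : ρ ^ m = ε₁ ^ m * ((X:ℝ)^n)⁻¹ := by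
            rw [hρdef, mul_pow, rpow_pow hm hX0]
          rw [this, div_pow]
          field_simp
          ring
      _ ≤ ENNReal.ofReal ((S'.card : ℝ) * ρ^m) := by
          apply ENNReal.ofReal_le_ofReal
          apply mul_le_mul_of_nonneg_right _ (by positivity)
          -- (X/8)^n ≤ card S'
          have hcard : (2*M)^n ≤ S'.card := by
            have h0mem : (0 : Fin n → ℤ) ∈ Sbox n M := by
              rw [Sbox, Fintype.mem_piFinset]
              intro i
              simp [Finset.mem_Icc]
            rw [hS'def, Finset.card_erase_of_mem h0mem, card_Sbox]
            have : (2*M)^n < (2*M+1)^n := Nat.pow_lt_pow_left (by omega) hn.ne'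
            omega
          calc ((X/8):ℝ)^n ≤ ((2*M:ℕ) : ℝ)^n := by
                apply pow_le_pow_left₀ (by linarith) _ n
                push_cast
                linarith
            _ ≤ (S'.card : ℝ) := by exact_mod_cast Nat.cast_le.2 hcard
      _ ≤ (S'.card : ℕ) • ENNReal.ofReal (ρ^m) := by
          rw [nsmul_eq_mul, ENNReal.ofReal_mul (by positivity)]
          apply mul_le_mul_of_nonneg_right _ zero_le
          · rw [ENNReal.ofReal_natCast]
      _ ≤ ∑ q ∈ S', volume (Metric.closedBall (c q) ρ ∩ Set.Icc (0:Fin m → ℝ) 1) :=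
          Finset.card_nsmul_le_sum S' _ _ hball
  · -- membership property
    intro b hb
    rw [hEdef] at hb
    simp only [Set.mem_iUnion, exists_prop] at hb
    obtain ⟨q, hq, hball, _⟩ := hb
    refine ⟨q, hS'ne q hq, by linarith [hS'norm q hq], ?_⟩
    have h1 : intDist (A.mulVec (iv q) - b) ≤ ‖(A.mulVec (iv q) - b) - iv (pfl q)‖ :=
      intDist_le _ _
    have h2 : (A.mulVec (iv q) - b) - iv (pfl q) = c q - b := by
      simp only [hcdef]; abel
    rw [h2] at h1
    calc intDist (A.mulVec (iv q) - b) ≤ ‖c q - b‖ := h1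
      _ = dist b (c q) := by rw [dist_eq_norm, norm_sub_rev]
      _ ≤ ρ := Metric.mem_closedBall.1 hball
      _ = ε₁ * X ^ e := rfl


lemma WA_eq (δ : ℝ) :
    WA m n A (fun r => δ * r ^ (-(n : ℝ) / m)) = Set.Icc 0 1 ∩ Wfull A δ := rfl

lemma measurable_Wfull (δ : ℝ) : MeasurableSet (Wfull A δ) := by
  have heq : Wfull A δ = ⋂ N : ℕ, ⋃ q : Fin n → ℤ, ⋃ (_ : (N:ℝ) ≤ ‖iv q‖),
      {b : Fin m → ℝ | intDist (A.mulVec (iv q) - b) < δ * ‖iv q‖ ^ (-(n : ℝ) / m)} := by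
    ext b
    simp only [Set.mem_iInter, Set.mem_iUnion, Set.mem_setOf_eq, Wfull]
    constructor
    · intro hb N
      by_contra hcon
      push_neg at hcon
      apply hb
      apply Set.Finite.subset (finite_iv_le (N : ℝ))
      intro q hq
      simp only [Set.mem_setOf_eq] at *
      by_contra hq2
      push_neg at hq2
      exact absurd hq (not_lt.2 (hcon q (by linarith)))
    · intro hb
      intro hfin
      obtain ⟨c, hc⟩ := (hfin.image (fun q => ‖iv q‖)).bddAbove
      obtain ⟨N, hN⟩ := exists_nat_gt c
      obtain ⟨q, hq1, hq2⟩ := hb N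
      have : ‖iv q‖ ≤ c := hc (Set.mem_image_of_mem _ hq2)
      linarith
  rw [heq]
  apply MeasurableSet.iInter
  intro N
  apply MeasurableSet.iUnion
  intro q
  apply MeasurableSet.iUnion
  intro _
  have : IsOpen {b : Fin m → ℝ | intDist (A.mulVec (iv q) - b) < δ * ‖iv q‖ ^ (-(n : ℝ) / m)} := by
    have hcont : Continuous fun b : Fin m → ℝ => intDist (A.mulVec (iv q) - b) := by
      apply Metric.continuous_iff.2
      intro b η hη
      refine ⟨η, hη, fun b' hb' => ?_⟩
      rw [Real.dist_eq, abs_lt]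
      have h1 := intDist_le_add_norm (A.mulVec (iv q) - b') (A.mulVec (iv q) - b)
      have h2 := intDist_le_add_norm (A.mulVec (iv q) - b) (A.mulVec (iv q) - b')
      have e1 : A.mulVec (iv q) - b' - (A.mulVec (iv q) - b) = b - b' := by abel
      have e2 : A.mulVec (iv q) - b - (A.mulVec (iv q) - b') = b' - b := by abel
      rw [e1] at h1
      rw [e2] at h2
      have hn1 : ‖b - b'‖ = dist b' b := by rw [dist_comm, dist_eq_norm]
      have hn2 : ‖b' - b‖ = dist b' b := by rw [dist_eq_norm]
      rw [hn1] at h1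
      rw [hn2] at h2
      constructor <;> linarith
    exact isOpen_lt hcont continuous_const
  exact this.measurableSet

lemma measurable_WA (δ : ℝ) :
    MeasurableSet (WA m n A (fun r => δ * r ^ (-(n : ℝ) / m))) := by
  rw [WA_eq]
  exact measurableSet_Icc.inter (measurable_Wfull A δ)

lemma volume_Icc01 : volume (Set.Icc (0 : Fin m → ℝ) 1) = 1 := by
  rw [← Set.pi_univ_Icc, volume_pi_pi]
  simp [Real.volume_Icc]

/-- The positive measure lemma: `W_A(ψ_δ)` has measure at least a positive constant. -/
lemma W_pos (hm : 0 < m) (hn : 0 < n) (hA : ¬ Singular m n A) {δ : ℝ} (hδ : 0 < δ) :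
    0 < volume (WA m n A (fun r => δ * r ^ (-(n : ℝ) / m))) := by
  obtain ⟨ε, hε, hε1, hspec⟩ := nonsingular_spec A hA
  -- good scales
  have hXseq : ∀ i : ℕ, ∃ X : ℝ, (i:ℝ) ≤ X ∧ 8 ≤ X ∧
      ∀ q : Fin n → ℤ, q ≠ 0 → ‖iv q‖ < X →
        ε * X ^ (-(n : ℝ) / m) ≤ intDist (A.mulVec (iv q)) := fun i => hspec (i:ℝ)
  choose X hX1 hX2 hX3 using hXseq
  have hE : ∀ i : ℕ, ∃ E : Set (Fin m → ℝ), MeasurableSet E ∧ E ⊆ Set.Icc 0 1 ∧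
      ENNReal.ofReal ((min δ ε / 8) ^ m * ((8:ℝ)⁻¹) ^ n) ≤ volume E ∧
      ∀ b ∈ E, ∃ q : Fin n → ℤ, q ≠ 0 ∧ 4 * ‖iv q‖ ≤ X i ∧
        intDist (A.mulVec (iv q) - b) ≤ (min δ ε / 8) * (X i) ^ (-(n : ℝ) / m) :=
    fun i => scale_lemma A hm hn hε hε1 hδ (hX2 i) (hX3 i)
  choose E hEmeas hEsub hEvol hEmem using hE
  set κ : ℝ≥0∞ := ENNReal.ofReal ((min δ ε / 8) ^ m * ((8:ℝ)⁻¹) ^ n) with hκdef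
  have hκ0 : 0 < κ := by
    rw [hκdef]
    apply ENNReal.ofReal_pos.2
    positivity
  set U : ℕ → Set (Fin m → ℝ) := fun N => ⋃ i, ⋃ (_ : N ≤ i), E i with hUdef
  have hUmeas : ∀ N, MeasurableSet (U N) :=
    fun N => MeasurableSet.iUnion fun i => MeasurableSet.iUnion fun _ => hEmeas i
  have hUanti : Antitone U := by
    intro N N' hNN'
    apply Set.iUnion₂_subset
    intro i hi
    exact Set.subset_iUnion₂ (s := fun i _ => E i) i (le_trans hNN' hi)
  have hUsub : ∀ N, U N ⊆ Set.Icc 0 1 := by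
    intro N
    apply Set.iUnion₂_subset
    intro i _
    exact hEsub i
  have hUvol : ∀ N, κ ≤ volume (U N) := by
    intro N
    refine le_trans (hEvol N) (measure_mono ?_)
    exact Set.subset_iUnion₂ (s := fun i _ => E i) N le_rfl
  have hUfin : volume (U 0) ≠ ⊤ := by
    apply ne_of_lt
    calc volume (U 0) ≤ volume (Set.Icc (0 : Fin m → ℝ) 1) := measure_mono (hUsub 0)
      _ = 1 := volume_Icc01
      _ < ⊤ := ENNReal.one_lt_top
  set T : Set (Fin m → ℝ) := ⋂ N, U N with hTdef
  have hTvol : κ ≤ volume T := by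
    rw [hTdef, hUanti.measure_iInter (fun N => (hUmeas N).nullMeasurableSet) ⟨0, hUfin⟩]
    exact le_iInf hUvol
  -- null set of exact hits
  set Z : Set (Fin m → ℝ) := ⋃ (q : Fin n → ℤ), ⋃ (p : Fin m → ℤ),
      {A.mulVec (iv q) - iv p} with hZdef
  have hZ0 : volume Z = 0 := by
    apply measure_iUnion_null
    intro q
    apply measure_iUnion_null
    intro p
    -- singleton has measure zero since m ≥ 1
    have : ({A.mulVec (iv q) - iv p} : Set (Fin m → ℝ)) ⊆
        {f : Fin m → ℝ | f ⟨0, hm⟩ = (A.mulVec (iv q) - iv p) ⟨0, hm⟩} := by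
      intro x hx
      rw [Set.mem_singleton_iff] at hx
      simp [hx]
    apply measure_mono_null this
    have := Measure.pi_hyperplane (μ := fun _ : Fin m => (volume : Measure ℝ)) ⟨0, hm⟩
      ((A.mulVec (iv q) - iv p) ⟨0, hm⟩)
    rw [volume_pi]
    exact this
  -- T \ Z is contained in WA
  have hTsub : T \ Z ⊆ WA m n A (fun r => δ * r ^ (-(n : ℝ) / m)) := by
    intro b hb
    obtain ⟨hbT, hbZ⟩ := hb
    have hbIcc : b ∈ Set.Icc (0 : Fin m → ℝ) 1 := by
      have := Set.mem_iInter.1 hbT 0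
      rw [hUdef] at this
      simp only [Set.mem_iUnion] at this
      obtain ⟨i, _, hbi⟩ := this
      exact hEsub i hbi
    refine ⟨hbIcc, ?_⟩
    -- the set of good q is infinite
    set Q : Set (Fin n → ℤ) := {q | intDist (A.mulVec (iv q) - b) <
        δ * ‖iv q‖ ^ (-(n : ℝ) / m)} with hQdef
    show Q.Infinite
    by_contra hfin
    rw [Set.not_infinite] at hfin
    -- for each N pick a good pair
    have hpick : ∀ N : ℕ, ∃ i : ℕ, N ≤ i ∧ ∃ q : Fin n → ℤ, q ∈ Q ∧
        intDist (A.mulVec (iv q) - b) ≤ (min δ ε / 8) * (X i) ^ (-(n : ℝ) / m) := by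
      intro N
      have := Set.mem_iInter.1 hbT N
      rw [hUdef] at this
      simp only [Set.mem_iUnion] at this
      obtain ⟨i, hNi, hbi⟩ := this
      obtain ⟨q, hq0, hq4, hqd⟩ := hEmem i b hbi
      refine ⟨i, hNi, q, ?_, hqd⟩
      rw [hQdef, Set.mem_setOf_eq]
      have h1 : ‖iv q‖ < X i := by
        have := norm_iv_pos hq0
        linarith
      have h2 : (X i) ^ (-(n : ℝ) / m) < ‖iv q‖ ^ (-(n : ℝ) / m) := by
        apply Real.rpow_lt_rpow_of_neg (by linarith [norm_iv_pos hq0]) h1 (expo_neg hm hn)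
      have h3 : (min δ ε / 8) ≤ δ := by
        have h4 : min δ ε ≤ δ := min_le_left _ _
        linarith
      calc intDist (A.mulVec (iv q) - b) ≤ (min δ ε / 8) * (X i) ^ (-(n : ℝ) / m) := hqd
        _ ≤ δ * (X i) ^ (-(n : ℝ) / m) := by
            apply mul_le_mul_of_nonneg_right h3 (Real.rpow_pos_of_pos (by linarith [hX2 i]) _).le
        _ < δ * ‖iv q‖ ^ (-(n : ℝ) / m) := by
            apply mul_lt_mul_of_pos_left h2 hδ
    choose I hI q hqQ hqd using hpick
    -- pigeonhole: some q₀ repeats infinitely often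
    have hrange : Set.range q ⊆ Q := Set.range_subset_iff.2 hqQ
    have hrangefin : (Set.range q).Finite := hfin.subset hrange
    have : Finite (Set.range q) := hrangefin.to_subtype
    obtain ⟨⟨q₀, hq₀r⟩, hq₀inf⟩ := Finite.exists_infinite_fiber
      (fun N => (⟨q N, Set.mem_range_self N⟩ : Set.range q))
    have hfiber : {N : ℕ | q N = q₀}.Infinite := by
      rw [← Set.infinite_coe_iff]
      apply Infinite.of_injective (fun x : ((fun N => (⟨q N, Set.mem_range_self N⟩ : Set.range q)) ⁻¹' {⟨q₀, hq₀r⟩}) =>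
        (⟨x.1, by have := x.2; simp only [Set.mem_preimage, Set.mem_singleton_iff, Subtype.ext_iff] at this; exact this⟩ : {N : ℕ | q N = q₀}))
      intro a b hab
      simpa [Subtype.ext_iff] using hab
    -- intDist (A q₀ - b) = 0
    set t : ℝ := intDist (A.mulVec (iv q₀) - b) with htdef
    have ht0 : 0 ≤ t := intDist_nonneg _
    have hteq : t = 0 := by
      by_contra htne
      have htpos : 0 < t := lt_of_le_of_ne ht0 (Ne.symm htne)
      set c : ℝ := min δ ε / 8 with hcdef
      have hc : 0 < c := by positivity
      have hy : (0:ℝ) < (n:ℝ)/m := by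
        apply div_pos
        · exact_mod_cast hn
        · exact_mod_cast hm
      have htend : Tendsto (fun Y : ℝ => Y ^ (-((n:ℝ)/m))) atTop (𝓝 0) :=
        tendsto_rpow_neg_atTop hy
      have hev : ∀ᶠ Y : ℝ in atTop, Y ^ (-((n:ℝ)/m)) < t / c :=
        htend.eventually_lt_const (by positivity)
      obtain ⟨Y₀, hY₀⟩ := Filter.eventually_atTop.1 hev
      obtain ⟨N, hNfib, hNgt⟩ := hfiber.exists_gt ⌈Y₀⌉₊
      have hXN : Y₀ ≤ X (I N) := by
        have h1 : (⌈Y₀⌉₊ : ℝ) ≤ (N:ℝ) := by exact_mod_cast hNgt.le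
        have h2 : Y₀ ≤ (⌈Y₀⌉₊ : ℝ) := Nat.le_ceil _
        have h3 : (N : ℝ) ≤ (I N : ℝ) := by exact_mod_cast hI N
        have h4 := hX1 (I N)
        linarith
      have hbound := hqd N
      rw [Set.mem_setOf_eq] at hNfib
      rw [hNfib] at hbound
      have h5 : (X (I N)) ^ (-(n:ℝ)/m) < t / c := by
        have := hY₀ (X (I N)) hXN
        rw [neg_div]
        exact this
      have h6 : c * (X (I N)) ^ (-(n:ℝ)/m) < t := by
        rw [lt_div_iff₀ hc] at h5
        calc c * (X (I N)) ^ (-(n:ℝ)/m) = (X (I N)) ^ (-(n:ℝ)/m) * c := by ring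
          _ < t := h5
      linarith
    obtain ⟨p, hp⟩ := eq_iv_of_intDist_eq_zero hteq
    apply hbZ
    rw [hZdef]
    simp only [Set.mem_iUnion, Set.mem_singleton_iff]
    refine ⟨q₀, p, ?_⟩
    have h := sub_eq_iff_eq_add.1 hp
    rw [h]
    abel
  calc (0:ℝ≥0∞) < κ := hκ0
    _ ≤ volume T := hTvol
    _ = volume (T \ Z) := (measure_diff_null hZ0).symm
    _ ≤ volume (WA m n A (fun r => δ * r ^ (-(n : ℝ) / m))) := measure_mono hTsub

/-- Quasi-invariance of the approximable set under the rational translation group. -/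
lemma Wfull_translate (hm : 0 < m) (hn : 0 < n) {δ : ℝ} (hδ : 0 < δ)
    (q₀ : Fin n → ℤ) (p₀ : Fin m → ℤ) {b : Fin m → ℝ}
    (h : b + (A.mulVec (iv q₀) + iv p₀) ∈ Wfull A δ) :
    b ∈ Wfull A (2 ^ ((n:ℝ) / m) * δ) := by
  set g : Fin m → ℝ := A.mulVec (iv q₀) + iv p₀ with hgdef
  set e : ℝ := -(n : ℝ) / m with hedef
  have hQ : {q : Fin n → ℤ |
      intDist (A.mulVec (iv q) - (b + g)) < δ * ‖iv q‖ ^ e}.Infinite := h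
  set C : ℝ := max 1 (2 * ‖iv q₀‖) with hCdef
  have himg : (((fun q => q - q₀) '' {q : Fin n → ℤ |
      intDist (A.mulVec (iv q) - (b + g)) < δ * ‖iv q‖ ^ e}) \
      {q' : Fin n → ℤ | ‖iv q'‖ ≤ C}).Infinite := by
    apply Set.Infinite.diff _ (finite_iv_le C)
    apply Set.Infinite.image _ hQ
    intro a _ b _ hab
    simpa [sub_left_inj] using hab
  apply Set.Infinite.mono _ himg
  rintro q' ⟨⟨q, hq, rfl⟩, hq'⟩
  simp only [Set.mem_setOf_eq, not_le] at hq hq' ⊢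
  have hnorm1 : (1:ℝ) < ‖iv (q - q₀)‖ := lt_of_le_of_lt (le_max_left _ _) hq'
  have hnorm2 : 2 * ‖iv q₀‖ < ‖iv (q - q₀)‖ := lt_of_le_of_lt (le_max_right _ _) hq'
  have hpos : (0:ℝ) < ‖iv (q - q₀)‖ := by linarith
  -- the intDist identity
  have hid : intDist (A.mulVec (iv (q - q₀)) - b) = intDist (A.mulVec (iv q) - (b + g)) := by
    have heq : A.mulVec (iv (q - q₀)) - b = (A.mulVec (iv q) - (b + g)) + iv p₀ := by
      rw [iv_sub, Matrix.mulVec_sub, hgdef]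
      abel
    rw [heq, intDist_add_iv]
  -- norm comparison
  have hqn : ‖iv (q - q₀)‖ / 2 ≤ ‖iv q‖ := by
    have h1 : ‖iv (q - q₀)‖ ≤ ‖iv q‖ + ‖iv q₀‖ := by
      calc ‖iv (q - q₀)‖ = ‖iv q - iv q₀‖ := by rw [iv_sub]
        _ ≤ ‖iv q‖ + ‖iv q₀‖ := norm_sub_le _ _
    linarith
  have hq0pos : (0:ℝ) < ‖iv q‖ := by
    have := norm_nonneg (iv q₀)
    linarith [hqn, hpos]
  have hcomp : ‖iv q‖ ^ e ≤ (‖iv (q - q₀)‖ / 2) ^ e := by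
    apply Real.rpow_le_rpow_of_nonpos (by linarith) hqn (expo_neg hm hn).le
  have hhalf : (‖iv (q - q₀)‖ / 2) ^ e = 2 ^ ((n:ℝ)/m) * ‖iv (q - q₀)‖ ^ e := by
    rw [Real.div_rpow (by linarith) (by norm_num)]
    rw [div_eq_mul_inv, ← Real.rpow_neg (by norm_num : (0:ℝ) ≤ 2)]
    have : -e = (n:ℝ)/m := by rw [hedef]; ring
    rw [this, mul_comm]
  calc intDist (A.mulVec (iv (q - q₀)) - b) = intDist (A.mulVec (iv q) - (b + g)) := hid
    _ < δ * ‖iv q‖ ^ e := hq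
    _ ≤ δ * (2 ^ ((n:ℝ)/m) * ‖iv (q - q₀)‖ ^ e) := by
        rw [← hhalf]
        exact mul_le_mul_of_nonneg_left hcomp hδ.le
    _ = 2 ^ ((n:ℝ)/m) * δ * ‖iv (q - q₀)‖ ^ e := by ring

end Main

lemma preconnected (m : ℕ) : PreconnectedSpace (Fin m → ℝ) :=
  ⟨(convex_univ (𝕜 := ℝ) (E := Fin m → ℝ)).isPreconnected⟩

/-- A closed subgroup of `ℝ^m` with positive measure is everything. -/
lemma subgroup_eq_univ_of_vol_pos (hm : 0 < m) (H : AddSubgroup (Fin m → ℝ))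
    (hclosed : IsClosed (H : Set (Fin m → ℝ)))
    (hvol : volume (H : Set (Fin m → ℝ)) ≠ 0) :
    (H : Set (Fin m → ℝ)) = Set.univ := by
  set μ : Measure (Fin m → ℝ) := volume with hμ
  have hmeas : MeasurableSet (H : Set (Fin m → ℝ)) := hclosed.measurableSet
  -- a density point
  have hae := Besicovitch.ae_tendsto_measure_inter_div_of_measurableSet μ hmeas
  have hExc : μ {x | ¬ Tendsto (fun r => μ ((H : Set (Fin m → ℝ)) ∩ closedBall x r) /
      μ (closedBall x r)) (𝓝[>] 0) (𝓝 ((H : Set (Fin m → ℝ)).indicator 1 x))} = 0 := hae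
  have hne : ((H : Set (Fin m → ℝ)) \ {x | ¬ Tendsto (fun r => μ ((H : Set (Fin m → ℝ)) ∩ closedBall x r) /
      μ (closedBall x r)) (𝓝[>] 0) (𝓝 ((H : Set (Fin m → ℝ)).indicator 1 x))}).Nonempty := by
    rw [Set.nonempty_iff_ne_empty]
    intro hemp
    apply hvol
    have : (H : Set (Fin m → ℝ)) ⊆ {x | ¬ Tendsto (fun r => μ ((H : Set (Fin m → ℝ)) ∩ closedBall x r) /
        μ (closedBall x r)) (𝓝[>] 0) (𝓝 ((H : Set (Fin m → ℝ)).indicator 1 x))} := by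
      rw [← Set.diff_eq_empty]
      exact hemp
    exact measure_mono_null this hExc
  obtain ⟨x₀, hx₀H, hx₀T⟩ := hne
  simp only [Set.mem_setOf_eq, not_not] at hx₀T
  rw [Set.indicator_of_mem hx₀H] at hx₀T
  have hx₀T' : Tendsto (fun r => μ ((H : Set (Fin m → ℝ)) ∩ closedBall x₀ r) /
      μ (closedBall x₀ r)) (𝓝[>] 0) (𝓝 1) := by
    simpa using hx₀T
  -- threshold
  set θ : ℝ := (3/4 : ℝ)^m / 4 with hθdef
  have hθpos : 0 < θ := by positivity
  have hθlt : (0:ℝ) < 1 - θ ∧ (1-θ:ℝ) < 1 := by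
    constructor
    · have : (3/4:ℝ)^m ≤ 1 := pow_le_one₀ (by norm_num) (by norm_num)
      rw [hθdef]; linarith
    · linarith
  have hlt1 : (ENNReal.ofReal (1 - θ)) < 1 := by
    rw [← ENNReal.ofReal_one]
    exact ENNReal.ofReal_lt_ofReal_iff_of_nonneg (by linarith [hθlt.1]) |>.2 hθlt.2
  have hev := hx₀T'.eventually (eventually_gt_nhds hlt1)
  rw [eventually_nhdsWithin_iff] at hev
  obtain ⟨s₀, hs₀pos, hs₀⟩ := Metric.eventually_nhds_iff.1 hev
  set r : ℝ := min (s₀/2) 1 with hrdef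
  have hrpos : 0 < r := by
    apply lt_min (by linarith) one_pos
  have hrs : r < s₀ := by
    calc r ≤ s₀/2 := min_le_left _ _
      _ < s₀ := by linarith
  have hrmem : (0:ℝ) < r ∧ dist r 0 < s₀ := by
    constructor
    · exact hrpos
    · rw [Real.dist_eq, sub_zero, abs_of_pos hrpos]; exact hrs
  have hfrac := hs₀ (by rw [Real.dist_eq, sub_zero, abs_of_pos hrpos]; exact hrs)
    (Set.mem_Ioi.2 hrpos)
  -- convert to measure bound: μ (closedBall x₀ r \ H) ≤ ofReal (θ * (2r)^m)
  have hball : μ (closedBall x₀ r) = ENNReal.ofReal ((2*r)^m) := by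
    rw [hμ, Real.volume_pi_closedBall x₀ hrpos.le, Fintype.card_fin]
  have hballne : μ (closedBall x₀ r) ≠ 0 := by
    rw [hball]; exact (ENNReal.ofReal_pos.2 (by positivity)).ne'
  have hballtop : μ (closedBall x₀ r) ≠ ⊤ := by
    rw [hball]; exact ENNReal.ofReal_ne_top
  have hlower : ENNReal.ofReal (1-θ) * μ (closedBall x₀ r) ≤
      μ ((H : Set (Fin m → ℝ)) ∩ closedBall x₀ r) := by
    have := ENNReal.mul_lt_of_lt_div hfrac
    exact this.le
  have hupper : μ (closedBall x₀ r \ (H : Set (Fin m → ℝ))) ≤ ENNReal.ofReal (θ * (2*r)^m) := by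
    have hdiff : μ (closedBall x₀ r \ (H : Set (Fin m → ℝ))) =
        μ (closedBall x₀ r) - μ ((H : Set (Fin m → ℝ)) ∩ closedBall x₀ r) := by
      have h1 : closedBall x₀ r \ (H : Set (Fin m → ℝ)) =
          closedBall x₀ r \ ((H : Set (Fin m → ℝ)) ∩ closedBall x₀ r) := by
        ext y; simp only [Set.mem_diff, Set.mem_inter_iff]; tauto
      rw [h1]
      rw [measure_diff Set.inter_subset_right
        (hmeas.inter measurableSet_closedBall).nullMeasurableSet]
      · exact ne_top_of_le_ne_top hballtop (measure_mono Set.inter_subset_right)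
    rw [hdiff]
    calc μ (closedBall x₀ r) - μ ((H : Set (Fin m → ℝ)) ∩ closedBall x₀ r)
        ≤ μ (closedBall x₀ r) - ENNReal.ofReal (1-θ) * μ (closedBall x₀ r) :=
          tsub_le_tsub_left hlower _
      _ = ENNReal.ofReal ((2*r)^m) - ENNReal.ofReal ((1-θ) * (2*r)^m) := by
          rw [hball, ← ENNReal.ofReal_mul (by linarith [hθlt.1])]
      _ ≤ ENNReal.ofReal (θ * (2*r)^m) := by
          rw [← ENNReal.ofReal_sub _ (by nlinarith [pow_nonneg (by linarith : (0:ℝ) ≤ 2*r) m, hθlt.1])]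
          apply ENNReal.ofReal_le_ofReal
          nlinarith [pow_nonneg (by linarith : (0:ℝ) ≤ 2*r) m]
  -- now show closedBall 0 (r/2) ⊆ H
  have hsub : ∀ v : Fin m → ℝ, ‖v‖ ≤ r/2 → v ∈ H := by
    intro v hv
    -- the box
    set a : Fin m → ℝ := fun i => x₀ i + max 0 (v i) - r with hadef
    set B : Set (Fin m → ℝ) := Set.pi Set.univ (fun i => Set.Icc (a i) (a i + 3*r/2)) with hBdef
    have hvcoord : ∀ i, |v i| ≤ r/2 := by
      intro i
      calc |v i| = ‖v i‖ := (Real.norm_eq_abs _).symm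
        _ ≤ ‖v‖ := norm_le_pi_norm v i
        _ ≤ r/2 := hv
    have hB1 : B ⊆ closedBall x₀ r := by
      intro x hx
      simp only [hBdef, Set.mem_pi, Set.mem_univ, forall_true_left, Set.mem_Icc] at hx
      rw [mem_closedBall, dist_pi_le_iff hrpos.le]
      intro i
      obtain ⟨h1, h2⟩ := hx i
      rw [Real.dist_eq, abs_le]
      have hm1 : (0:ℝ) ≤ max 0 (v i) := le_max_left _ _
      have hm2 : max 0 (v i) ≤ r/2 := max_le (by linarith) (by linarith [hvcoord i, abs_le.1 (hvcoord i)])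
      constructor <;> [skip; skip] <;> simp only [hadef] at h1 h2 <;> linarith
    have hB2 : B ⊆ closedBall (x₀ + v) r := by
      intro x hx
      simp only [hBdef, Set.mem_pi, Set.mem_univ, forall_true_left, Set.mem_Icc] at hx
      rw [mem_closedBall, dist_pi_le_iff hrpos.le]
      intro i
      obtain ⟨h1, h2⟩ := hx i
      rw [Real.dist_eq, abs_le]
      have hm1 : max 0 (v i) - v i ≥ 0 := by
        rcases le_or_gt 0 (v i) with h | h
        · rw [max_eq_right h]; linarith
        · rw [max_eq_left h.le]; linarith
      have hm2 : max 0 (v i) - v i ≤ |v i| := by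
        rcases le_or_gt 0 (v i) with h | h
        · rw [max_eq_right h]; simp [abs_nonneg]
        · rw [max_eq_left h.le, abs_of_neg h]; linarith
      have hpi : (x₀ + v) i = x₀ i + v i := rfl
      rw [hpi]
      simp only [hadef] at h1 h2
      constructor <;> linarith [hvcoord i]
    have hBvol : μ B = ENNReal.ofReal ((3*r/2)^m) := by
      rw [hμ, hBdef, volume_pi_pi]
      simp only [Real.volume_Icc, add_sub_cancel_left]
      rw [Finset.prod_const, Finset.card_univ, Fintype.card_fin, ENNReal.ofReal_pow (by linarith)]
    -- translated ball difference
    have htrans : μ (closedBall (x₀ + v) r \ {y | y - v ∈ (H : Set (Fin m → ℝ))}) =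
        μ (closedBall x₀ r \ (H : Set (Fin m → ℝ))) := by
      have hseteq : closedBall (x₀ + v) r \ {y | y - v ∈ (H : Set (Fin m → ℝ))} =
          (fun y => y - v) ⁻¹' (closedBall x₀ r \ (H : Set (Fin m → ℝ))) := by
        ext y
        simp only [Set.mem_diff, Set.mem_preimage, Set.mem_setOf_eq, mem_closedBall]
        constructor
        · rintro ⟨h1, h2⟩
          refine ⟨?_, h2⟩
          rw [dist_eq_norm] at h1 ⊢
          have : y - v - x₀ = y - (x₀ + v) := by abel
          rw [this]
          exact h1
        · rintro ⟨h1, h2⟩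
          refine ⟨?_, h2⟩
          rw [dist_eq_norm] at h1 ⊢
          have : y - (x₀ + v) = y - v - x₀ := by abel
          rw [this]
          exact h1
      rw [hseteq]
      have : (fun y : Fin m → ℝ => y - v) = (fun y => y + (-v)) := by
        funext y; rw [sub_eq_add_neg]
      rw [this]
      exact measure_preimage_add_right μ (-v) _
    -- covering
    have hcover : B ⊆ (B ∩ (H : Set (Fin m → ℝ)) ∩ {y | y - v ∈ (H : Set (Fin m → ℝ))}) ∪
        (closedBall x₀ r \ (H : Set (Fin m → ℝ))) ∪
        (closedBall (x₀ + v) r \ {y | y - v ∈ (H : Set (Fin m → ℝ))}) := by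
      intro x hx
      by_cases h1 : x ∈ (H : Set (Fin m → ℝ))
      · by_cases h2 : x - v ∈ (H : Set (Fin m → ℝ))
        · exact Or.inl (Or.inl ⟨⟨hx, h1⟩, h2⟩)
        · exact Or.inr ⟨hB2 hx, h2⟩
      · exact Or.inl (Or.inr ⟨hB1 hx, h1⟩)
    have hkey : 0 < μ (B ∩ (H : Set (Fin m → ℝ)) ∩ {y | y - v ∈ (H : Set (Fin m → ℝ))}) := by
      by_contra hzero
      push_neg at hzero
      rw [le_zero_iff] at hzero
      have htot := measure_union_le (μ := μ)
        ((B ∩ (H : Set (Fin m → ℝ)) ∩ {y | y - v ∈ (H : Set (Fin m → ℝ))}) ∪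
        (closedBall x₀ r \ (H : Set (Fin m → ℝ))))
        (closedBall (x₀ + v) r \ {y | y - v ∈ (H : Set (Fin m → ℝ))})
      have htot2 := measure_union_le (μ := μ)
        (B ∩ (H : Set (Fin m → ℝ)) ∩ {y | y - v ∈ (H : Set (Fin m → ℝ))})
        (closedBall x₀ r \ (H : Set (Fin m → ℝ)))
      have hBle := measure_mono (μ := μ) hcover
      have hfinal : μ B ≤ 0 + ENNReal.ofReal (θ * (2*r)^m) + ENNReal.ofReal (θ * (2*r)^m) := by
        calc μ B ≤ _ := hBle
          _ ≤ _ := htot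
          _ ≤ _ := by
              apply add_le_add _ (le_of_eq htrans |>.trans hupper)
              calc _ ≤ _ := htot2
                _ ≤ 0 + ENNReal.ofReal (θ * (2*r)^m) := by
                    apply add_le_add (le_of_eq hzero) hupper
      rw [hBvol, zero_add] at hfinal
      have : ENNReal.ofReal ((3*r/2)^m) ≤ ENNReal.ofReal (2 * (θ * (2*r)^m)) := by
        calc ENNReal.ofReal ((3*r/2)^m) ≤ ENNReal.ofReal (θ * (2*r)^m) + ENNReal.ofReal (θ * (2*r)^m) := hfinal
          _ = ENNReal.ofReal (θ * (2*r)^m + θ * (2*r)^m) := by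
              rw [ENNReal.ofReal_add (by positivity) (by positivity)]
          _ = ENNReal.ofReal (2 * (θ * (2*r)^m)) := by ring_nf
      rw [ENNReal.ofReal_le_ofReal_iff (by positivity)] at this
      -- real contradiction: (3r/2)^m > 2θ(2r)^m = (3/4)^m (2r)^m / 2 = (3r/2)^m / 2
      have heq : θ * (2*r)^m = (3*r/2)^m / 4 := by
        rw [hθdef]
        rw [div_mul_eq_mul_div, ← mul_pow]
        congr 2
        ring
      rw [heq] at this
      have hp : (0:ℝ) < (3*r/2)^m := by positivity
      linarith
    obtain ⟨y, hy⟩ := nonempty_of_measure_ne_zero hkey.ne'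
    obtain ⟨⟨_, hyH⟩, hyvH⟩ := hy
    have : y - (y - v) ∈ H := sub_mem hyH hyvH
    simpa using this
  -- H is open
  have hopen : IsOpen (H : Set (Fin m → ℝ)) := by
    rw [Metric.isOpen_iff]
    intro x hx
    refine ⟨r/2, by linarith, ?_⟩
    intro y hy
    rw [mem_ball, dist_eq_norm] at hy
    have : y - x ∈ H := hsub _ (by linarith)
    have h2 : y = x + (y - x) := by abel
    rw [h2]
    exact add_mem hx this
  have : PreconnectedSpace (Fin m → ℝ) := preconnected m
  exact IsClopen.eq_univ ⟨hclosed, hopen⟩ ⟨x₀, hx₀H⟩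

section Main2
variable {m n : ℕ} (A : Matrix (Fin m) (Fin n) ℝ)

lemma iv_neg {k : ℕ} (q : Fin k → ℤ) : iv (-q) = - iv q := by
  funext i; simp [iv]

/-- The subgroup `Aℤ^n + ℤ^m` of `ℝ^m`. -/
def Gsub : AddSubgroup (Fin m → ℝ) where
  carrier := {x | ∃ q : Fin n → ℤ, ∃ p : Fin m → ℤ, x = A.mulVec (iv q) + iv p}
  zero_mem' := ⟨0, 0, by rw [iv_zero, iv_zero, Matrix.mulVec_zero]; simp⟩
  add_mem' := by
    rintro x y ⟨q, p, rfl⟩ ⟨q', p', rfl⟩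
    exact ⟨q + q', p + p', by rw [iv_add, iv_add, Matrix.mulVec_add]; abel⟩
  neg_mem' := by
    rintro x ⟨q, p, rfl⟩
    exact ⟨-q, -p, by rw [iv_neg, iv_neg, Matrix.mulVec_neg]; abel⟩

lemma singular_of_proper (hm : 0 < m) (hn : 0 < n)
    (hne : ((Gsub A).topologicalClosure : Set (Fin m → ℝ)) ≠ Set.univ) :
    Singular m n A := by
  set K : AddSubgroup (Fin m → ℝ) := (Gsub A).topologicalClosure with hKdef
  have hKclosed : IsClosed (K : Set (Fin m → ℝ)) :=
    AddSubgroup.isClosed_topologicalClosure _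
  have hKvol : volume (K : Set (Fin m → ℝ)) = 0 := by
    by_contra h
    exact hne (subgroup_eq_univ_of_vol_pos hm K hKclosed h)
  set K₀ : Set (Fin m → ℝ) := (K : Set (Fin m → ℝ)) ∩ Set.Icc 0 1 with hK₀def
  have hK₀closed : IsClosed K₀ := hKclosed.inter isClosed_Icc
  have hK₀vol : volume K₀ = 0 := measure_mono_null Set.inter_subset_left hKvol
  have hK₀bdd : Bornology.IsBounded K₀ := by
    apply (isBounded_closedBall (x := (0 : Fin m → ℝ)) (r := 1)).subset
    intro x hx
    obtain ⟨-, hx2⟩ := hx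
    rw [mem_closedBall, dist_zero_right]
    apply pi_norm_le_iff_of_nonneg (by norm_num) |>.2
    intro i
    rw [Set.mem_Icc] at hx2
    have h1 := hx2.1 i
    have h2 := hx2.2 i
    simp only [Pi.zero_apply, Pi.one_apply] at h1 h2
    rw [Real.norm_eq_abs, abs_le]
    exact ⟨by linarith, h2⟩
  have hΦfin : volume (cthickening 1 K₀) ≠ ⊤ := by
    obtain ⟨R, hR⟩ := (hK₀bdd.cthickening (δ := 1)).subset_closedBall 0
    apply ne_top_of_le_ne_top _ (measure_mono hR)
    rcases le_or_gt 0 R with h | h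
    · rw [Real.volume_pi_closedBall 0 h]
      exact ENNReal.ofReal_ne_top
    · rw [closedBall_eq_empty.2 h]
      simp
  have htend := tendsto_measure_cthickening_of_isClosed ⟨1, one_pos, hΦfin⟩ hK₀closed
  rw [hK₀vol] at htend
  intro ε' hε'
  set c₀ : ℝ≥0∞ := ENNReal.ofReal ((3:ℝ)⁻¹^n * (2*ε'/3)^m) with hc₀def
  have hc₀pos : 0 < c₀ := ENNReal.ofReal_pos.2 (by positivity)
  have hev : ∀ᶠ s in 𝓝 (0:ℝ), volume (cthickening s K₀) < c₀ :=
    htend.eventually (gt_mem_nhds hc₀pos)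
  obtain ⟨s₀, hs₀pos, hs₀⟩ := Metric.eventually_nhds_iff.1 hev
  set base : ℝ := (ε' / (3 * s₀)) ^ ((m:ℝ)/n) with hbasedef
  have hbasepos : 0 < base := Real.rpow_pos_of_pos (by positivity) _
  refine ⟨max 3 (base + 1), le_trans (by norm_num) (le_max_left _ _), ?_⟩
  intro X hX
  have hX3 : (3:ℝ) ≤ X := le_trans (le_max_left _ _) hX
  have hXbase : base < X := lt_of_lt_of_le (by linarith [le_trans (le_max_right 3 (base+1)) hX]) le_rfl
  have hXpos : (0:ℝ) < X := by linarith
  set r : ℝ := ε' * X ^ (-(n:ℝ)/m) with hrdef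
  have hXe : (0:ℝ) < X ^ (-(n:ℝ)/m) := Real.rpow_pos_of_pos hXpos _
  have hrpos : 0 < r := by positivity
  -- r/3 < s₀
  have hα : (0:ℝ) < (n:ℝ)/m := by
    apply div_pos
    · exact_mod_cast hn
    · exact_mod_cast hm
  have h5 : (0:ℝ) < X ^ ((n:ℝ)/m) := Real.rpow_pos_of_pos hXpos _
  have hrs : r/3 < s₀ := by
    have h1 : base ^ ((n:ℝ)/m) < X ^ ((n:ℝ)/m) :=
      Real.rpow_lt_rpow hbasepos.le hXbase hα
    have h2 : base ^ ((n:ℝ)/m) = ε' / (3 * s₀) := by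
      rw [hbasedef, ← Real.rpow_mul (by positivity)]
      have hmn : (m:ℝ)/n * ((n:ℝ)/m) = 1 := by
        have hm' : (m:ℝ) ≠ 0 := by exact_mod_cast hm.ne'
        have hn' : (n:ℝ) ≠ 0 := by exact_mod_cast hn.ne'
        field_simp
      rw [hmn, Real.rpow_one]
    have h3 : ε' / (3 * s₀) < X ^ ((n:ℝ)/m) := h2 ▸ h1
    have h4 : X ^ (-(n:ℝ)/m) = (X ^ ((n:ℝ)/m))⁻¹ := by
      rw [neg_div, Real.rpow_neg hXpos.le]
    have h7 : ε' < 3*s₀ * (X ^ ((n:ℝ)/m)) := by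
      rw [div_lt_iff₀ (by positivity)] at h3
      nlinarith
    have hkey := mul_pos (sub_pos.2 h7) (inv_pos.2 h5)
    have hcancel : (X ^ ((n:ℝ)/m)) * (X ^ ((n:ℝ)/m))⁻¹ = 1 := mul_inv_cancel₀ h5.ne'
    rw [hrdef, h4]
    nlinarith [hkey, hcancel, hs₀pos, inv_pos.2 h5]
  have hΦ : volume (cthickening (r/3) K₀) < c₀ := by
    apply hs₀
    rw [Real.dist_eq, sub_zero, abs_of_pos (by positivity)]
    exact hrs
  -- centers
  set pfl : (Fin n → ℤ) → (Fin m → ℤ) := fun q => fun i => ⌊A.mulVec (iv q) i⌋ with hpfl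
  set cpt : (Fin n → ℤ) → (Fin m → ℝ) := fun q => A.mulVec (iv q) - iv (pfl q) with hcdef
  have hc0 : ∀ q i, 0 ≤ cpt q i ∧ cpt q i < 1 := by
    intro q i
    have h1 : cpt q i = Int.fract (A.mulVec (iv q) i) := rfl
    rw [h1]
    exact ⟨Int.fract_nonneg _, Int.fract_lt_one _⟩
  have hcK : ∀ q, cpt q ∈ K₀ := by
    intro q
    constructor
    · apply (Gsub A).le_topologicalClosure
      exact ⟨q, -(pfl q), by rw [iv_neg]; simp only [hcdef]; abel⟩
    · rw [Set.mem_Icc]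
      constructor <;> intro i
      · exact (hc0 q i).1
      · exact (hc0 q i).2.le
  set M : ℕ := ⌊X/3⌋₊ with hMdef
  have hM3 : (M:ℝ) ≤ X/3 := Nat.floor_le (by linarith)
  have hM1 : X/3 ≤ 2*(M:ℝ)+1 := by
    have := Nat.sub_one_lt_floor (X/3)
    have hX1 : (1:ℝ) ≤ X/3 := by linarith
    push_cast
    nlinarith [Nat.sub_one_lt_floor (X/3)]
  by_cases hcase : ∃ q ∈ Sbox n M, ∃ q' ∈ Sbox n M, q ≠ q' ∧ dist (cpt q) (cpt q') < r
  · obtain ⟨q, hq, q', hq', hne', hdist⟩ := hcase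
    refine ⟨q - q', ?_, ?_, ?_⟩
    · -- intDist bound
      have heq : A.mulVec (iv (q - q')) - iv (pfl q - pfl q') = cpt q - cpt q' := by
        rw [iv_sub, iv_sub, Matrix.mulVec_sub]
        simp only [hcdef]
        abel
      have h1 : intDist (A.mulVec (iv (q - q'))) ≤ ‖cpt q - cpt q'‖ := by
        rw [← heq]
        exact intDist_le _ _
      show intDist (A.mulVec (iv (q - q'))) < ε' * X ^ (-(n:ℝ)/m)
      calc intDist (A.mulVec (iv (q - q'))) ≤ ‖cpt q - cpt q'‖ := h1
        _ = dist (cpt q) (cpt q') := (dist_eq_norm _ _).symm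
        _ < r := hdist
    · show 0 < ‖iv (q - q')‖
      have := norm_iv_pos (sub_ne_zero.2 hne')
      linarith
    · show ‖iv (q - q')‖ < X
      rw [iv_sub]
      calc ‖iv q - iv q'‖ ≤ ‖iv q‖ + ‖iv q'‖ := norm_sub_le _ _
        _ ≤ (M:ℝ) + M := add_le_add (mem_Sbox hq) (mem_Sbox hq')
        _ ≤ X/3 + X/3 := by linarith
        _ < X := by linarith
  · exfalso
    push_neg at hcase
    have hdisj : (↑(Sbox n M) : Set (Fin n → ℤ)).PairwiseDisjoint
        (fun q => closedBall (cpt q) (r/3)) := by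
      intro q hq q' hq' hne'
      apply closedBall_disjoint_closedBall
      have := hcase q (by exact_mod_cast hq) q' (by exact_mod_cast hq') hne'
      linarith
    have hcover : (⋃ q ∈ Sbox n M, closedBall (cpt q) (r/3)) ⊆ cthickening (r/3) K₀ := by
      apply Set.iUnion₂_subset
      intro q _
      exact closedBall_subset_cthickening (hcK q) (r/3)
    have hsum := measure_biUnion_finset (μ := (volume : Measure (Fin m → ℝ))) hdisj
      (fun q _ => measurableSet_closedBall)
    have hballvol : ∀ q : Fin n → ℤ,
        volume (closedBall (cpt q) (r/3)) = ENNReal.ofReal ((2*(r/3))^m) := by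
      intro q
      rw [Real.volume_pi_closedBall _ (by positivity), Fintype.card_fin]
    have hchain : ENNReal.ofReal (((2*(M:ℝ)+1))^n * (2*(r/3))^m) ≤
        volume (cthickening (r/3) K₀) := by
      calc ENNReal.ofReal (((2*(M:ℝ)+1))^n * (2*(r/3))^m)
          = ENNReal.ofReal (((2*(M:ℝ)+1))^n) * ENNReal.ofReal ((2*(r/3))^m) := by
            rw [ENNReal.ofReal_mul (by positivity)]
        _ ≤ ((Sbox n M).card : ℝ≥0∞) * ENNReal.ofReal ((2*(r/3))^m) := by
            apply mul_le_mul_of_nonneg_right _ zero_le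
            rw [card_Sbox]
            rw [← ENNReal.ofReal_natCast]
            apply ENNReal.ofReal_le_ofReal
            push_cast
            norm_num
        _ = (Sbox n M).card • ENNReal.ofReal ((2*(r/3))^m) := by
            rw [nsmul_eq_mul]
        _ ≤ ∑ q ∈ Sbox n M, volume (closedBall (cpt q) (r/3)) := by
            apply Finset.card_nsmul_le_sum
            intro q _
            rw [hballvol q]
        _ = volume (⋃ q ∈ Sbox n M, closedBall (cpt q) (r/3)) := hsum.symm
        _ ≤ volume (cthickening (r/3) K₀) := measure_mono hcover
    -- numeric contradiction
    have hnum : (3:ℝ)⁻¹^n * (2*ε'/3)^m ≤ ((2*(M:ℝ)+1))^n * (2*(r/3))^m := by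
      have e1 : (2*(r/3))^m = (2*ε'/3)^m * (X^n)⁻¹ := by
        have : 2*(r/3) = (2*ε'/3) * X ^ (-(n:ℝ)/m) := by
          rw [hrdef]; ring
        rw [this, mul_pow, rpow_pow hm hXpos]
      have e2 : ((X:ℝ)/3)^n = (3:ℝ)⁻¹^n * X^n := by
        rw [div_pow]
        rw [inv_pow]
        field_simp
      have e3 : ((X/3):ℝ)^n ≤ ((2*(M:ℝ)+1))^n := pow_le_pow_left₀ (by linarith) hM1 n
      have hXn : (0:ℝ) < X^n := by positivity
      calc (3:ℝ)⁻¹^n * (2*ε'/3)^m = ((X/3)^n * (X^n)⁻¹) * (2*ε'/3)^m := by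
            rw [e2]
            field_simp
        _ = (X/3)^n * ((2*ε'/3)^m * (X^n)⁻¹) := by ring
        _ ≤ ((2*(M:ℝ)+1))^n * ((2*ε'/3)^m * (X^n)⁻¹) := by
            apply mul_le_mul_of_nonneg_right e3 (by positivity)
        _ = ((2*(M:ℝ)+1))^n * (2*(r/3))^m := by rw [e1]
    have : c₀ ≤ volume (cthickening (r/3) K₀) := by
      calc c₀ = ENNReal.ofReal ((3:ℝ)⁻¹^n * (2*ε'/3)^m) := hc₀def
        _ ≤ ENNReal.ofReal (((2*(M:ℝ)+1))^n * (2*(r/3))^m) := ENNReal.ofReal_le_ofReal hnum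
        _ ≤ _ := hchain
    exact absurd hΦ (not_lt.2 this)

lemma Gsub_carrier {A : Matrix (Fin m) (Fin n) ℝ} {x : Fin m → ℝ} :
    x ∈ Gsub A ↔ ∃ q : Fin n → ℤ, ∃ p : Fin m → ℤ, x = A.mulVec (iv q) + iv p :=
  Iff.rfl

lemma BadA_mono {δ' δ : ℝ} (h : δ' ≤ δ) : BadA m n A δ ⊆ BadA m n A δ' := by
  intro b hb
  obtain ⟨hb1, hb2⟩ := hb
  refine ⟨hb1, ?_⟩
  intro hbW
  apply hb2
  obtain ⟨hIcc, hinf⟩ := hbW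
  refine ⟨hIcc, ?_⟩
  apply Set.Infinite.mono _ hinf
  intro q hq
  simp only [Set.mem_setOf_eq] at hq ⊢
  calc intDist (A.mulVec (fun j => ((q j : ℝ))) - b) < δ' * ‖(fun j => ((q j : ℝ)))‖ ^ (-(n:ℝ)/m) := hq
    _ ≤ δ * ‖(fun j => ((q j : ℝ)))‖ ^ (-(n:ℝ)/m) := by
        apply mul_le_mul_of_nonneg_right h (Real.rpow_nonneg (norm_nonneg _) _)

/-- Main part: each `Bad_A(δ)` is null. -/
lemma bad_null (hm : 0 < m) (hn : 0 < n) (hA : ¬ Singular m n A)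
    {δ : ℝ} (hδ : 0 < δ) : volume (BadA m n A δ) = 0 := by
  by_contra hB0
  set μ : Measure (Fin m → ℝ) := volume with hμ
  set B : Set (Fin m → ℝ) := BadA m n A δ with hBdef
  have hBmeas : MeasurableSet B := measurableSet_Icc.diff (measurable_WA A δ)
  have hBpos : 0 < μ B := by
    rw [pos_iff_ne_zero]
    exact hB0
  -- density of the group
  have hdense : Dense ((Gsub A : AddSubgroup (Fin m → ℝ)) : Set (Fin m → ℝ)) := by
    by_contra hnd
    apply hA
    apply singular_of_proper A hm hn
    intro hc
    apply hnd
    rw [dense_iff_closure_eq]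
    rw [← AddSubgroup.topologicalClosure_coe]
    exact hc
  -- the auxiliary approximable set
  have h2pow : (0:ℝ) < 2 ^ ((n:ℝ)/m) := Real.rpow_pos_of_pos (by norm_num) _
  set δ'' : ℝ := δ / 2 ^ ((n:ℝ)/m) with hδ''def
  have hδ''pos : 0 < δ'' := by positivity
  have hδδ'' : 2 ^ ((n:ℝ)/m) * δ'' = δ := by
    rw [hδ''def]
    field_simp
  set W₂ : Set (Fin m → ℝ) := WA m n A (fun r => δ'' * r ^ (-(n : ℝ) / m)) with hW₂def
  have hW₂meas : MeasurableSet W₂ := measurable_WA A δ''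
  have hW₂pos : 0 < μ W₂ := W_pos A hm hn hA hδ''pos
  -- the translation claim
  have hclaim : ∀ g ∈ Gsub A, ∀ b ∈ B, b + g ∉ W₂ := by
    intro g hg b hb hbW
    obtain ⟨q₀, p₀, rfl⟩ := Gsub_carrier.1 hg
    have h1 : b + (A.mulVec (iv q₀) + iv p₀) ∈ Wfull A δ'' := by
      rw [hW₂def, WA_eq] at hbW
      exact hbW.2
    have h2 : b ∈ Wfull A δ := by
      have := Wfull_translate A hm hn hδ''pos q₀ p₀ h1
      rwa [hδδ''] at this
    obtain ⟨hbIcc, hbnW⟩ := hb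
    apply hbnW
    rw [WA_eq]
    exact ⟨hbIcc, h2⟩
  -- density point of B
  have hBae := Besicovitch.ae_tendsto_measure_inter_div μ B
  have hBex : ∃ b₀ ∈ B, Tendsto (fun s => μ (B ∩ closedBall b₀ s) / μ (closedBall b₀ s))
      (𝓝[>] 0) (𝓝 1) := by
    by_contra hcon
    push_neg at hcon
    have hsub : B ⊆ {x | ¬ Tendsto (fun s => μ (B ∩ closedBall x s) / μ (closedBall x s))
        (𝓝[>] 0) (𝓝 1)} := fun x hx => hcon x hx
    have h0 : μ.restrict B {x | ¬ Tendsto (fun s => μ (B ∩ closedBall x s) / μ (closedBall x s))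
        (𝓝[>] 0) (𝓝 1)} = 0 := hBae
    have h1 : μ.restrict B B = μ B := by
      rw [Measure.restrict_apply' hBmeas, Set.inter_self]
    have h2 : μ.restrict B B = 0 := by
      apply measure_mono_null hsub h0
    rw [h1] at h2
    exact absurd h2 hBpos.ne'
  obtain ⟨b₀, hb₀B, hb₀T⟩ := hBex
  -- density point of W₂
  have hWae := Besicovitch.ae_tendsto_measure_inter_div_of_measurableSet μ hW₂meas
  have hWex : ∃ y₀ ∈ W₂, Tendsto (fun s => μ (W₂ ∩ closedBall y₀ s) / μ (closedBall y₀ s))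
      (𝓝[>] 0) (𝓝 1) := by
    have hne : (W₂ \ {x | ¬ Tendsto (fun s => μ (W₂ ∩ closedBall x s) / μ (closedBall x s))
        (𝓝[>] 0) (𝓝 (W₂.indicator 1 x))}).Nonempty := by
      rw [Set.nonempty_iff_ne_empty]
      intro hemp
      have hsub : W₂ ⊆ {x | ¬ Tendsto (fun s => μ (W₂ ∩ closedBall x s) / μ (closedBall x s))
          (𝓝[>] 0) (𝓝 (W₂.indicator 1 x))} := by
        rw [← Set.diff_eq_empty]
        exact hemp
      exact absurd (measure_mono_null hsub hWae) hW₂pos.ne'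
    obtain ⟨y₀, hy₀W, hy₀T⟩ := hne
    simp only [Set.mem_setOf_eq, not_not] at hy₀T
    rw [Set.indicator_of_mem hy₀W] at hy₀T
    exact ⟨y₀, hy₀W, by simpa using hy₀T⟩
  obtain ⟨y₀, hy₀W, hy₀T⟩ := hWex
  -- thresholds
  set a : ℝ := 1 - 4⁻¹ * (2⁻¹:ℝ)^m with hadef
  have hapos : (0:ℝ) < 4⁻¹ * (2⁻¹:ℝ)^m := by positivity
  have ha1 : a < 1 := by rw [hadef]; linarith
  have ha0 : 0 ≤ a := by
    rw [hadef]
    have : (2⁻¹:ℝ)^m ≤ 1 := pow_le_one₀ (by norm_num) (by norm_num)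
    nlinarith
  have hev1 : ∀ᶠ s in 𝓝[>] (0:ℝ),
      (1/2 : ℝ≥0∞) < μ (B ∩ closedBall b₀ s) / μ (closedBall b₀ s) :=
    hb₀T.eventually (eventually_gt_nhds (by norm_num))
  have hev2 : ∀ᶠ s in 𝓝[>] (0:ℝ),
      ENNReal.ofReal a < μ (W₂ ∩ closedBall y₀ s) / μ (closedBall y₀ s) := by
    apply hy₀T.eventually (eventually_gt_nhds _)
    rw [← ENNReal.ofReal_one]
    exact ENNReal.ofReal_lt_ofReal_iff_of_nonneg ha0 |>.2 ha1
  obtain ⟨t₁, ht₁pos, ht₁⟩ := Metric.eventually_nhds_iff.1 (eventually_nhdsWithin_iff.1 hev1)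
  obtain ⟨t₂, ht₂pos, ht₂⟩ := Metric.eventually_nhds_iff.1 (eventually_nhdsWithin_iff.1 hev2)
  set r : ℝ := min t₁ t₂ / 4 with hrdef
  have hrpos : 0 < r := by
    have := lt_min ht₁pos ht₂pos
    positivity
  have hrt₁ : r < t₁ := by
    have h1 : r ≤ t₁ / 4 := by
      apply div_le_div_of_nonneg_right (min_le_left _ _) (by norm_num) |>.trans_eq rfl
    linarith
  have h2rt₂ : 2 * r < t₂ := by
    have h1 : r ≤ t₂ / 4 := by
      apply div_le_div_of_nonneg_right (min_le_right _ _) (by norm_num) |>.trans_eq rfl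
    linarith
  have hfrac1 := ht₁ (y := r)
    (by rw [Real.dist_eq, sub_zero, abs_of_pos hrpos]; exact hrt₁) (Set.mem_Ioi.2 hrpos)
  have hfrac2 := ht₂ (y := 2*r)
    (by rw [Real.dist_eq, sub_zero, abs_of_pos (by linarith)]; exact h2rt₂)
    (Set.mem_Ioi.2 (by linarith))
  -- measure computations
  have hball1 : μ (closedBall b₀ r) = ENNReal.ofReal ((2*r)^m) := by
    rw [hμ, Real.volume_pi_closedBall _ hrpos.le, Fintype.card_fin]
  have hball2 : μ (closedBall y₀ (2*r)) = ENNReal.ofReal ((2*(2*r))^m) := by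
    rw [hμ, Real.volume_pi_closedBall _ (by linarith), Fintype.card_fin]
  have hball2top : μ (closedBall y₀ (2*r)) ≠ ⊤ := by
    rw [hball2]; exact ENNReal.ofReal_ne_top
  have hlow : (1/2 : ℝ≥0∞) * μ (closedBall b₀ r) ≤ μ (B ∩ closedBall b₀ r) :=
    (ENNReal.mul_lt_of_lt_div hfrac1).le
  have hupper : μ (closedBall y₀ (2*r) \ W₂) ≤
      ENNReal.ofReal ((1-a) * (2*(2*r))^m) := by
    have hlow2 : ENNReal.ofReal a * μ (closedBall y₀ (2*r)) ≤
        μ (W₂ ∩ closedBall y₀ (2*r)) := (ENNReal.mul_lt_of_lt_div hfrac2).le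
    have hdiff : μ (closedBall y₀ (2*r) \ W₂) =
        μ (closedBall y₀ (2*r)) - μ (W₂ ∩ closedBall y₀ (2*r)) := by
      have h1 : closedBall y₀ (2*r) \ W₂ =
          closedBall y₀ (2*r) \ (W₂ ∩ closedBall y₀ (2*r)) := by
        ext y; simp only [Set.mem_diff, Set.mem_inter_iff]; tauto
      rw [h1, measure_diff Set.inter_subset_right
        (hW₂meas.inter measurableSet_closedBall).nullMeasurableSet
        (ne_top_of_le_ne_top hball2top (measure_mono Set.inter_subset_right))]
    rw [hdiff]
    calc μ (closedBall y₀ (2*r)) - μ (W₂ ∩ closedBall y₀ (2*r))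
        ≤ μ (closedBall y₀ (2*r)) - ENNReal.ofReal a * μ (closedBall y₀ (2*r)) :=
          tsub_le_tsub_left hlow2 _
      _ = ENNReal.ofReal ((2*(2*r))^m) - ENNReal.ofReal (a * (2*(2*r))^m) := by
          rw [hball2, ← ENNReal.ofReal_mul ha0]
      _ ≤ ENNReal.ofReal ((1-a) * (2*(2*r))^m) := by
          rw [← ENNReal.ofReal_sub _ (by positivity)]
          apply ENNReal.ofReal_le_ofReal
          nlinarith [pow_nonneg (by linarith : (0:ℝ) ≤ 2*(2*r)) m]
  -- pick a group element near y₀ - b₀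
  obtain ⟨g, hgG, hgdist⟩ := Metric.mem_closure_iff.1 (hdense (y₀ - b₀)) r hrpos
  -- translate
  have himg_sub : (fun y => y + g) '' (B ∩ closedBall b₀ r) ⊆
      closedBall y₀ (2*r) \ W₂ := by
    rintro _ ⟨b, ⟨hbB, hbball⟩, rfl⟩
    constructor
    · rw [mem_closedBall, dist_eq_norm]
      have heq : b + g - y₀ = (b - b₀) + (g - (y₀ - b₀)) := by abel
      rw [heq]
      calc ‖(b - b₀) + (g - (y₀ - b₀))‖ ≤ ‖b - b₀‖ + ‖g - (y₀ - b₀)‖ := norm_add_le _ _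
        _ ≤ r + r := by
            apply add_le_add
            · rw [← dist_eq_norm]; exact mem_closedBall.1 hbball
            · have hg2 : dist g (y₀ - b₀) < r := by
                first
                | exact hgdist
                | · rw [dist_comm] at hgdist
                    exact hgdist
              calc ‖g - (y₀ - b₀)‖ = dist g (y₀ - b₀) := (dist_eq_norm _ _).symm
                _ ≤ r := hg2.le
        _ = 2*r := by ring
    · exact hclaim g hgG b hbB
  have himg_meas : μ ((fun y => y + g) '' (B ∩ closedBall b₀ r)) =
      μ (B ∩ closedBall b₀ r) := by
    have heq : (fun y : Fin m → ℝ => y + g) '' (B ∩ closedBall b₀ r) =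
        (fun y : Fin m → ℝ => y + (-g)) ⁻¹' (B ∩ closedBall b₀ r) := by
      ext y
      simp only [Set.mem_image, Set.mem_preimage]
      constructor
      · rintro ⟨x, hx, rfl⟩
        have : x + g + -g = x := by abel
        rwa [this]
      · intro hy
        exact ⟨y + (-g), hy, by abel⟩
    rw [heq]
    exact measure_preimage_add_right μ (-g) _
  -- final contradiction
  have hchain : ENNReal.ofReal ((2*r)^m / 2) ≤ ENNReal.ofReal ((2*r)^m / 4) := by
    calc ENNReal.ofReal ((2*r)^m / 2) = (1/2 : ℝ≥0∞) * ENNReal.ofReal ((2*r)^m) := by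
          rw [ENNReal.ofReal_div_of_pos (by norm_num : (0:ℝ) < 2),
            (by norm_num : ENNReal.ofReal 2 = 2), ENNReal.div_eq_inv_mul, one_div]
      _ = (1/2 : ℝ≥0∞) * μ (closedBall b₀ r) := by rw [hball1]
      _ ≤ μ (B ∩ closedBall b₀ r) := hlow
      _ = μ ((fun y => y + g) '' (B ∩ closedBall b₀ r)) := himg_meas.symm
      _ ≤ μ (closedBall y₀ (2*r) \ W₂) := measure_mono himg_sub
      _ ≤ ENNReal.ofReal ((1-a) * (2*(2*r))^m) := hupper
      _ = ENNReal.ofReal ((2*r)^m / 4) := by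
          congr 1
          have h1 : (1-a) = 4⁻¹ * (2⁻¹:ℝ)^m := by rw [hadef]; ring
          have h2 : ((2:ℝ)*(2*r))^m = 2^m * (2*r)^m := mul_pow 2 (2*r) m
          rw [h1, h2]
          have h3 : (2⁻¹:ℝ)^m * 2^m = 1 := by
            rw [← mul_pow]
            norm_num
          calc 4⁻¹ * (2⁻¹:ℝ)^m * (2^m * (2*r)^m) = 4⁻¹ * ((2⁻¹:ℝ)^m * 2^m) * (2*r)^m := by ring
            _ = 4⁻¹ * (2*r)^m := by rw [h3]; ring
            _ = (2*r)^m / 4 := by ring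
  rw [ENNReal.ofReal_le_ofReal_iff (by positivity)] at hchain
  have : (0:ℝ) < (2*r)^m := by positivity
  linarith

/-- The full theorem body. -/
lemma final (hm : 0 < m) (hn : 0 < n) (hA : ¬ Singular m n A) :
    (∀ δ : ℝ, 0 < δ → volume (BadA m n A δ) = 0) ∧
    volume (⋃ δ ∈ Set.Ioi (0 : ℝ), BadA m n A δ) = 0 := by
  have h1 : ∀ δ : ℝ, 0 < δ → volume (BadA m n A δ) = 0 := fun δ hδ => bad_null A hm hn hA hδ
  refine ⟨h1, ?_⟩
  have hsub : (⋃ δ ∈ Set.Ioi (0:ℝ), BadA m n A δ) ⊆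
      ⋃ k : ℕ, BadA m n A (1/(k+1)) := by
    intro b hb
    simp only [Set.mem_iUnion, Set.mem_Ioi, exists_prop] at hb ⊢
    obtain ⟨δ, hδ, hbδ⟩ := hb
    obtain ⟨k, hk⟩ := exists_nat_one_div_lt hδ
    exact ⟨k, BadA_mono A (by push_cast; exact hk.le) hbδ⟩
  apply measure_mono_null hsub
  apply measure_iUnion_null
  intro k
  apply h1
  positivity

end Main2
end Aux

/-- If `A` is non-singular then each `Bad_A(δ)` is Lebesgue null, hence so is
`Bad_A = ⋃_{δ > 0} Bad_A(δ)`. -/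
theorem bad_null_of_nonsingular (m n : ℕ) (hm : 0 < m) (hn : 0 < n)
    (A : Matrix (Fin m) (Fin n) ℝ) (hA : ¬ Singular m n A) :
    (∀ δ : ℝ, 0 < δ → volume (BadA m n A δ) = 0) ∧
    volume (⋃ δ ∈ Set.Ioi (0 : ℝ), BadA m n A δ) = 0 :=
  Aux.final A hm hn hA
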